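/- Let H be a separable infinite-dimensional complex Hilbert space, M a nontrivial closed subspace of H, and (T_n)_{n≥1} a sequence of bounded linear operators on H. If (T_n) is subspace-disk topologically transitive with respect to M, then the set DC((T_n), M) of subspace-diskcyclic vectors for (T_n) with respect to M is a dense subset of M. -/

import Mathlib

open Pointwise

/-- A subset `S` of a Hilbert space is relatively open in the subspace `M`. -/
def RelOpenIn {H : Type*} [NormedAddCommGroup H] [InnerProductSpace ℂ H]
    (M : Submodule ℂ H) (S : Set H) : Prop :=
  IsOpen ((↑) ⁻¹' S : Set ↥M)

/-- `(T n)` is subspace-disk topologically transitive with respect to `M`. -/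
def SubspaceDiskTransitive {H : Type*} [NormedAddCommGroup H] [InnerProductSpace ℂ H]
    (T : ℕ → H →L[ℂ] H) (M : Submodule ℂ H) : Prop :=
  ∀ U V : Set H, U ⊆ M → V ⊆ M → U.Nonempty → V.Nonempty →
    RelOpenIn M U → RelOpenIn M V →
    ∃ (n : ℕ) (α : ℂ), 1 ≤ ‖α‖ ∧
      ∃ W : Set H, W ⊆ M ∧ W.Nonempty ∧ RelOpenIn M W ∧ W ⊆ (T n) ⁻¹' (α • U) ∩ V

/-- if `(T n)` is subspace-disk topologically transitive with respect to
`M`, then the set of subspace-diskcyclic vectors with respect to `M` is dense in `M`. -/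
theorem dense_subspace_diskcyclic_vectors_of_subspaceDiskTransitive
    {H : Type*} [NormedAddCommGroup H] [InnerProductSpace ℂ H] [CompleteSpace H]
    [TopologicalSpace.SeparableSpace H] (hinf : ¬ FiniteDimensional ℂ H)
    (M : Submodule ℂ H) (hMc : IsClosed (M : Set H)) (hM₁ : M ≠ ⊥) (hM₂ : M ≠ ⊤)
    (T : ℕ → H →L[ℂ] H) (htrans : SubspaceDiskTransitive T M) :
    (M : Set H) ⊆
      closure ({x : H | (M : Set H) ⊆
          closure ({y : H | ∃ (n : ℕ) (α : ℂ), 0 < ‖α‖ ∧ ‖α‖ ≤ 1 ∧ y = α • T n x}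
            ∩ M)} ∩ M) := by
  haveI : CompleteSpace ↥M := hMc.completeSpace_coe
  haveI : BaireSpace ↥M := BaireSpace.of_completelyPseudoMetrizable
  haveI : SecondCountableTopology H := UniformSpace.secondCountable_of_separable H
  obtain ⟨ℬ, hℬc, hℬne, hℬ⟩ := TopologicalSpace.exists_countable_basis ↥M
  -- the "hitting sets"
  set D : Set ↥M → Set ↥M := fun b =>
    {x : ↥M | ∃ (n : ℕ) (β : ℂ), 0 < ‖β‖ ∧ ‖β‖ ≤ 1 ∧
      β • T n (x : H) ∈ Subtype.val '' b} with hD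
  -- each interior (D b) is dense for b in the basis
  have hdense : ∀ b ∈ ℬ, Dense (interior (D b)) := by
    intro b hb
    rw [dense_iff_inter_open]
    intro V hVo hVne
    have hbne : b.Nonempty := Set.nonempty_iff_ne_empty.2 (by rintro rfl; exact hℬne hb)
    obtain ⟨n, α, hα, W, hWM, hWne, hWo, hWsub⟩ :=
      htrans (Subtype.val '' b) (Subtype.val '' V)
        (by rintro _ ⟨y, _, rfl⟩; exact y.2) (by rintro _ ⟨y, _, rfl⟩; exact y.2)
        (hbne.image _) (hVne.image _)
        (by
          unfold RelOpenIn
          rw [Set.preimage_image_eq b Subtype.val_injective]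
          exact hℬ.isOpen hb)
        (by
          unfold RelOpenIn
          rw [Set.preimage_image_eq V Subtype.val_injective]
          exact hVo)
    have hαne : α ≠ 0 := by
      intro h; rw [h, norm_zero] at hα; linarith
    obtain ⟨w, hw⟩ := hWne
    refine ⟨⟨w, hWM hw⟩, ?_, ?_⟩
    · -- membership in V
      have := (hWsub hw).2
      obtain ⟨v, hv, hveq⟩ := this
      have : (⟨w, hWM hw⟩ : ↥M) = v := Subtype.ext hveq.symm
      rw [this]; exact hv
    · -- membership in interior (D b): the open set (↑)⁻¹' W is inside D b
      have hWo' : IsOpen ((Subtype.val ⁻¹' W : Set ↥M)) := hWo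
      have hsub : (Subtype.val ⁻¹' W : Set ↥M) ⊆ D b := by
        intro x hx
        have h1 : T n (x : H) ∈ α • (Subtype.val '' b) := (hWsub hx).1
        obtain ⟨u, hu, hueq⟩ := h1
        refine ⟨n, α⁻¹, ?_, ?_, ?_⟩
        · rw [norm_inv]; positivity
        · rw [norm_inv]; exact inv_le_one_of_one_le₀ hα
        · rw [← hueq, inv_smul_smul₀ hαne]; exact hu
      exact interior_maximal hsub hWo' hw
  -- Baire: the countable intersection is dense
  have hGdense : Dense (⋂ b ∈ ℬ, interior (D b)) :=
    dense_biInter_of_isOpen (fun b _ => isOpen_interior) hℬc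
      (fun b hb => hdense b hb)
  -- points of the intersection are subspace-diskcyclic
  have hkey : (⋂ b ∈ ℬ, interior (D b)) ⊆
      Subtype.val ⁻¹' ({x : H | (M : Set H) ⊆
        closure ({y : H | ∃ (n : ℕ) (α : ℂ), 0 < ‖α‖ ∧ ‖α‖ ≤ 1 ∧ y = α • T n x}
          ∩ M)} ∩ M) := by
    intro x hx
    refine ⟨?_, x.2⟩
    intro z hz
    rw [mem_closure_iff]
    intro O hOo hzO
    -- find a basic set around z inside the preimage of O
    have hzo : (⟨z, hz⟩ : ↥M) ∈ (Subtype.val ⁻¹' O : Set ↥M) := hzO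
    obtain ⟨b, hb, hzb, hbO⟩ := hℬ.exists_subset_of_mem_open hzo
      (hOo.preimage continuous_subtype_val)
    have hxb : x ∈ interior (D b) := by
      have := Set.mem_iInter₂.1 hx b hb
      exact this
    obtain ⟨n, β, hβ0, hβ1, ⟨u, hub, hueq⟩⟩ := interior_subset hxb
    refine ⟨β • T n (x : H), ?_, ⟨⟨n, β, hβ0, hβ1, rfl⟩, ?_⟩⟩
    · have : u ∈ (Subtype.val ⁻¹' O : Set ↥M) := hbO hub
      rw [← hueq]; exact this
    · rw [← hueq]; exact u.2
  -- conclude: transfer density from the subtype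
  intro z hz
  have h1 : (⟨z, hz⟩ : ↥M) ∈ closure (⋂ b ∈ ℬ, interior (D b)) := hGdense _
  have h2 : (⟨z, hz⟩ : ↥M) ∈ closure (Subtype.val ⁻¹' ({x : H | (M : Set H) ⊆
      closure ({y : H | ∃ (n : ℕ) (α : ℂ), 0 < ‖α‖ ∧ ‖α‖ ≤ 1 ∧ y = α • T n x}
        ∩ M)} ∩ M) : Set ↥M) := closure_mono hkey h1
  have := continuous_subtype_val.closure_preimage_subset _ h2
  exact this
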